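/- Let r ≥ 2, g ≥ 2 and d be integers with gcd(r, d) = 1. Let (r₁, …, r_ℓ) be a composition of r (so each r_i is a positive integer and r₁ + … + r_ℓ = r) of length ℓ ≥ 2. Then, as rational numbers, Σ_{1 ≤ i < j ≤ ℓ} r_i r_j (g − 1) + Σ_{i=1}^{ℓ−1} (r_i + r_{i+1}) · ⟨ −(r₁ + … + r_i) d / r ⟩ ≥ 2, where ⟨α⟩ denotes the fractional part of a rational number α (the unique representative of α mod ℤ in [0, 1)). -/

import Mathlib

/-- For any composition `r = c 0 + … + c (ℓ-1)` of length `ℓ ≥ 2` of `r ≥ 2`, with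
`g ≥ 2` and `gcd(r, d) = 1`, the exponent
`Σ_{i<j} c i · c j · (g-1) + Σ_{i=0}^{ℓ-2} (c i + c (i+1)) · ⟨-(c 0 + … + c i)·d/r⟩`
appearing in del Baño's formula is at least `2`.  Here `⟨α⟩ = Int.fract α` is the
fractional part of a rational number. -/
theorem del_bano_exponent_ge_two (r : ℕ) (hr : 2 ≤ r) (g d : ℤ) (hg : 2 ≤ g)
    (hgcd : Int.gcd (r : ℤ) d = 1)
    (ℓ : ℕ) (hℓ : 2 ≤ ℓ) (c : ℕ → ℕ)
    (hc : ∀ i < ℓ, 1 ≤ c i) (hsum : ∑ i ∈ Finset.range ℓ, c i = r) :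
    (2 : ℚ) ≤
      (∑ j ∈ Finset.range ℓ, ∑ i ∈ Finset.range j,
        (c i : ℚ) * (c j : ℚ) * ((g : ℚ) - 1)) +
      ∑ i ∈ Finset.range (ℓ - 1),
        ((c i : ℚ) + (c (i + 1) : ℚ)) *
          Int.fract (-(∑ k ∈ Finset.range (i + 1), (c k : ℚ)) * (d : ℚ) / (r : ℚ)) := by
  set S : ℕ := ∑ j ∈ Finset.range ℓ, ∑ i ∈ Finset.range j, c i * c j with hS
  have hfirst : (∑ j ∈ Finset.range ℓ, ∑ i ∈ Finset.range j,
      (c i : ℚ) * (c j : ℚ) * ((g : ℚ) - 1)) = (S : ℚ) * ((g : ℚ) - 1) := by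
    rw [hS]
    push_cast
    rw [Finset.sum_mul]
    refine Finset.sum_congr rfl fun j _ => ?_
    rw [Finset.sum_mul]
  have hg1 : (1 : ℚ) ≤ (g : ℚ) - 1 := by
    have : (2 : ℚ) ≤ (g : ℚ) := by exact_mod_cast hg
    linarith
  have hsecond : 0 ≤ ∑ i ∈ Finset.range (ℓ - 1),
      ((c i : ℚ) + (c (i + 1) : ℚ)) *
        Int.fract (-(∑ k ∈ Finset.range (i + 1), (c k : ℚ)) * (d : ℚ) / (r : ℚ)) := by
    refine Finset.sum_nonneg fun i _ => mul_nonneg (by positivity) (Int.fract_nonneg _)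
  by_cases hS2 : 2 ≤ S
  · have : (2 : ℚ) ≤ (S : ℚ) := by exact_mod_cast hS2
    have h1 : (2 : ℚ) ≤ (S : ℚ) * ((g : ℚ) - 1) := by nlinarith
    rw [hfirst]; linarith
  · -- S ≤ 1, derive ℓ = 2, c 0 = c 1 = 1, r = 2
    push_neg at hS2
    have hSle : S ≤ 1 := by omega
    have hℓ2 : ℓ = 2 := by
      by_contra h
      have h3 : 3 ≤ ℓ := by omega
      have h2mem : 2 ∈ Finset.range ℓ := by simp; omega
      have hinner : c 0 * c 2 + c 1 * c 2 ≤ ∑ i ∈ Finset.range 2, c i * c 2 := by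
        simp [Finset.sum_range_succ]
      have := Finset.single_le_sum
        (f := fun j => ∑ i ∈ Finset.range j, c i * c 2) (fun j _ => Nat.zero_le _) h2mem
      have hle : (∑ i ∈ Finset.range 2, c i * c 2) ≤ S := by
        calc (∑ i ∈ Finset.range 2, c i * c 2)
            ≤ ∑ j ∈ Finset.range ℓ, ∑ i ∈ Finset.range j, c i * c j := by
              refine Finset.single_le_sum (f := fun j => ∑ i ∈ Finset.range j, c i * c j)
                (fun j _ => Nat.zero_le _) h2mem
          _ = S := rfl
      have hc0 := hc 0 (by omega)
      have hc1 := hc 1 (by omega)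
      have hc2 := hc 2 (by omega)
      have : 2 ≤ ∑ i ∈ Finset.range 2, c i * c 2 := by
        simp [Finset.sum_range_succ]
        nlinarith
      omega
    subst hℓ2
    have hSval : S = c 0 * c 1 := by
      rw [hS]; simp [Finset.sum_range_succ]
    have hc0 := hc 0 (by omega)
    have hc1 := hc 1 (by omega)
    have hc01 : c 0 = 1 ∧ c 1 = 1 := by
      constructor <;> nlinarith [hSval ▸ hSle]
    obtain ⟨h0, h1⟩ := hc01
    have hr2 : r = 2 := by
      rw [← hsum]; simp [Finset.sum_range_succ, h0, h1]
    subst hr2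
    -- d is odd
    have hodd : Odd d := by
      rw [← Int.not_even_iff_odd]
      intro ⟨k, hk⟩
      have h2 : (2 : ℤ) ∣ d := ⟨k, by omega⟩
      have hdv : (2:ℤ) ∣ ((Int.gcd ((2:ℕ):ℤ) d : ℕ) : ℤ) :=
        Int.dvd_coe_gcd ⟨1, by norm_num⟩ h2
      rw [hgcd] at hdv
      norm_num at hdv
    obtain ⟨k, hk⟩ := hodd
    have hfr : Int.fract (-(∑ k ∈ Finset.range 1, (c k : ℚ)) * (d : ℚ) / ((2:ℕ) : ℚ))
        = 1 / 2 := by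
      have heq : -(∑ k ∈ Finset.range 1, (c k : ℚ)) * (d : ℚ) / ((2:ℕ) : ℚ)
          = ((-k - 1 : ℤ) : ℚ) + 1 / 2 := by
        simp [Finset.sum_range_succ, h0]
        push_cast [hk]
        ring
      rw [heq, Int.fract_intCast_add]
      rw [Int.fract]
      norm_num
    rw [hfirst, hSval, h0, h1]
    simp only [show (2:ℕ) - 1 = 1 from rfl, Finset.sum_range_one, h0, h1, hfr]
    push_cast
    linarith
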